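/- Let d ≥ 1 and let A : (Fin d → ℝ) → Matrix (Fin d) (Fin d) ℝ be such that A v is a graph Laplacian whenever v ⪰ 0. Let h ≥ 0, and let y₀ ∈ ℝ^d satisfy y₀ ⪰ 0 and ∑_i (y₀)_i = 1. Define the Strang splitting step x_{1/2} = exp((h/2)·A y₀) *ᵥ y₀, z₁ = exp(h·A x_{1/2}) *ᵥ y₀, x₁ = exp((h/2)·A z₁) *ᵥ x_{1/2}, and the smoothed update y₁ = (x₁ + z₁)/2. Then y₁ ⪰ 0 and ∑_i (y₁)_i = 1. -/

import Mathlib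

open Matrix

/-- An `n × n` real matrix is a graph Laplacian if its off-diagonal entries are
nonnegative, its diagonal entries are nonpositive, and each column sums to zero. -/
def IsGraphLaplacian {n : ℕ} (A : Matrix (Fin n) (Fin n) ℝ) : Prop :=
  (∀ k ℓ : Fin n, k ≠ ℓ → 0 ≤ A k ℓ) ∧ (∀ k : Fin n, A k k ≤ 0) ∧
    (∀ ℓ : Fin n, ∑ k : Fin n, A k ℓ = 0)

namespace StrangAux

open NormedSpace

variable {d : ℕ}

lemma summable_exp (N : Matrix (Fin d) (Fin d) ℝ) :
    Summable fun n : ℕ => ((n.factorial : ℝ))⁻¹ • N ^ n := by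
  letI : SeminormedRing (Matrix (Fin d) (Fin d) ℝ) := Matrix.linftyOpSemiNormedRing
  letI : NormedRing (Matrix (Fin d) (Fin d) ℝ) := Matrix.linftyOpNormedRing
  letI : NormedAlgebra ℝ (Matrix (Fin d) (Fin d) ℝ) := Matrix.linftyOpNormedAlgebra
  exact expSeries_summable' (𝕂 := ℝ) N

lemma summable_row (N : Matrix (Fin d) (Fin d) ℝ) (i : Fin d) :
    Summable fun n : ℕ => (((n.factorial : ℝ))⁻¹ • N ^ n) i :=
  Pi.summable.mp (summable_exp N) i

lemma summable_entry (N : Matrix (Fin d) (Fin d) ℝ) (i j : Fin d) :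
    Summable fun n : ℕ => (((n.factorial : ℝ))⁻¹ • N ^ n) i j :=
  Pi.summable.mp (summable_row N i) j

lemma entry_exp (N : Matrix (Fin d) (Fin d) ℝ) (i j : Fin d) :
    exp N i j = ∑' n : ℕ, (((n.factorial : ℝ))⁻¹ • N ^ n) i j := by
  have h0 : exp N = ∑' n : ℕ, ((n.factorial : ℝ))⁻¹ • N ^ n := by
    rw [exp_eq_tsum ℝ]
  have h1 : (∑' n : ℕ, ((n.factorial : ℝ))⁻¹ • N ^ n) i = ∑' n : ℕ, (((n.factorial : ℝ))⁻¹ • N ^ n) i :=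
    tsum_apply (summable_exp N)
  have h2 : (∑' n : ℕ, (((n.factorial : ℝ))⁻¹ • N ^ n) i) j = ∑' n : ℕ, (((n.factorial : ℝ))⁻¹ • N ^ n) i j :=
    tsum_apply (summable_row N i)
  rw [h0]
  rw [show (∑' n : ℕ, ((n.factorial : ℝ))⁻¹ • N ^ n) i j = ((∑' n : ℕ, ((n.factorial : ℝ))⁻¹ • N ^ n) i) j from rfl,
    h1, h2]

lemma pow_entry_nonneg {N : Matrix (Fin d) (Fin d) ℝ} (hN : ∀ i j, 0 ≤ N i j) :
    ∀ (n : ℕ) (i j : Fin d), 0 ≤ (N ^ n) i j := by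
  intro n
  induction n with
  | zero =>
    intro i j
    rw [pow_zero, Matrix.one_apply]
    split <;> norm_num
  | succ n ih =>
    intro i j
    rw [pow_succ, Matrix.mul_apply]
    exact Finset.sum_nonneg fun k _ => mul_nonneg (ih i k) (hN k j)

lemma exp_entry_nonneg_of_nonneg {N : Matrix (Fin d) (Fin d) ℝ} (hN : ∀ i j, 0 ≤ N i j)
    (i j : Fin d) : 0 ≤ exp N i j := by
  rw [entry_exp]
  refine tsum_nonneg fun n => ?_
  have : (((n.factorial : ℝ))⁻¹ • N ^ n) i j = ((n.factorial : ℝ))⁻¹ * (N ^ n) i j := rfl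
  rw [this]
  exact mul_nonneg (by positivity) (pow_entry_nonneg hN n i j)

lemma pow_colsum {N : Matrix (Fin d) (Fin d) ℝ} (hc : ∀ ℓ, ∑ k, N k ℓ = 0) :
    ∀ (n : ℕ) (ℓ : Fin d), ∑ k, (N ^ n) k ℓ = if n = 0 then 1 else 0 := by
  intro n
  induction n with
  | zero =>
    intro ℓ
    simp [Matrix.one_apply]
  | succ n ih =>
    intro ℓ
    simp only [Nat.succ_ne_zero, if_false]
    rw [pow_succ']
    simp only [Matrix.mul_apply]
    rw [Finset.sum_comm]
    have : ∀ m : Fin d, ∑ k, N k m * (N ^ n) m ℓ = (∑ k, N k m) * (N ^ n) m ℓ := by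
      intro m; rw [Finset.sum_mul]
    calc ∑ m, ∑ k, N k m * (N ^ n) m ℓ = ∑ m, (∑ k, N k m) * (N ^ n) m ℓ := by
          simp_rw [Finset.sum_mul]
      _ = 0 := by simp [hc]

lemma exp_colsum {N : Matrix (Fin d) (Fin d) ℝ} (hc : ∀ ℓ, ∑ k, N k ℓ = 0) (j : Fin d) :
    ∑ k, exp N k j = 1 := by
  simp_rw [entry_exp]
  rw [← Summable.tsum_finsetSum (fun k _ => summable_entry N k j)]
  have hterm : ∀ n : ℕ, (∑ k, (((n.factorial : ℝ))⁻¹ • N ^ n) k j) = if n = 0 then 1 else 0 := by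
    intro n
    have : ∀ k, (((n.factorial : ℝ))⁻¹ • N ^ n) k j = ((n.factorial : ℝ))⁻¹ * (N ^ n) k j := fun _ => rfl
    simp_rw [this, ← Finset.mul_sum, pow_colsum hc n j]
    split <;> simp_all
  simp_rw [hterm]
  rw [tsum_eq_single 0 (by intro n hn; simp [hn])]
  simp

lemma smul_isGraphLaplacian {t : ℝ} (ht : 0 ≤ t) {L : Matrix (Fin d) (Fin d) ℝ}
    (hL : IsGraphLaplacian L) : IsGraphLaplacian (t • L) := by
  obtain ⟨h1, h2, h3⟩ := hL
  refine ⟨fun k ℓ hkl => ?_, fun k => ?_, fun ℓ => ?_⟩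
  · exact mul_nonneg ht (h1 k ℓ hkl)
  · exact mul_nonpos_of_nonneg_of_nonpos ht (h2 k)
  · have : ∀ k, (t • L) k ℓ = t * L k ℓ := fun _ => rfl
    simp_rw [this, ← Finset.mul_sum, h3 ℓ, mul_zero]

lemma exp_lap_entry_nonneg {M : Matrix (Fin d) (Fin d) ℝ} (hM : IsGraphLaplacian M)
    (i j : Fin d) : 0 ≤ exp M i j := by
  obtain ⟨hoff, hdiag, hcol⟩ := hM
  set c : ℝ := ∑ k, -(M k k) with hc
  have hck : ∀ k, -(M k k) ≤ c := fun k =>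
    Finset.single_le_sum (f := fun k => -(M k k))
      (fun k _ => neg_nonneg.2 (hdiag k)) (Finset.mem_univ k)
  set N : Matrix (Fin d) (Fin d) ℝ := M + c • (1 : Matrix (Fin d) (Fin d) ℝ) with hN
  have hNnn : ∀ i j, 0 ≤ N i j := by
    intro i j
    have : N i j = M i j + c * (1 : Matrix (Fin d) (Fin d) ℝ) i j := rfl
    rw [this]
    by_cases hij : i = j
    · subst hij
      rw [Matrix.one_apply_eq, mul_one]
      linarith [hck i]
    · rw [Matrix.one_apply_ne hij, mul_zero, add_zero]
      exact hoff i j hij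
  have hsplit : M = N + (-c) • (1 : Matrix (Fin d) (Fin d) ℝ) := by
    rw [hN]; module
  have hcomm : Commute N ((-c) • (1 : Matrix (Fin d) (Fin d) ℝ)) :=
    (Commute.one_right N).smul_right (-c)
  have hmul : exp M = exp N * exp ((-c) • (1 : Matrix (Fin d) (Fin d) ℝ)) := by
    rw [hsplit]
    exact Matrix.exp_add_of_commute N _ hcomm
  have halg : (-c) • (1 : Matrix (Fin d) (Fin d) ℝ) =
      algebraMap ℝ (Matrix (Fin d) (Fin d) ℝ) (-c) := (Algebra.algebraMap_eq_smul_one _).symm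
  have hexp1 : exp ((-c) • (1 : Matrix (Fin d) (Fin d) ℝ)) =
      Real.exp (-c) • (1 : Matrix (Fin d) (Fin d) ℝ) := by
    letI : SeminormedRing (Matrix (Fin d) (Fin d) ℝ) := Matrix.linftyOpSemiNormedRing
    letI : NormedRing (Matrix (Fin d) (Fin d) ℝ) := Matrix.linftyOpNormedRing
    letI : NormedAlgebra ℝ (Matrix (Fin d) (Fin d) ℝ) := Matrix.linftyOpNormedAlgebra
    rw [halg]
    erw [← algebraMap_exp_comm, Algebra.algebraMap_eq_smul_one, Real.exp_eq_exp_ℝ]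
  have : exp M = Real.exp (-c) • exp N := by
    rw [hmul, hexp1, mul_smul_comm, mul_one]
  rw [this]
  have : (Real.exp (-c) • exp N) i j = Real.exp (-c) * exp N i j := rfl
  rw [this]
  exact mul_nonneg (Real.exp_nonneg _) (exp_entry_nonneg_of_nonneg hNnn i j)

lemma step {M : Matrix (Fin d) (Fin d) ℝ} (hM : IsGraphLaplacian M)
    {v : Fin d → ℝ} (hv : ∀ i, 0 ≤ v i) :
    (∀ i, 0 ≤ (exp M *ᵥ v) i) ∧ ∑ i, (exp M *ᵥ v) i = ∑ i, v i := by
  constructor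
  · intro i
    rw [Matrix.mulVec, dotProduct]
    exact Finset.sum_nonneg fun j _ =>
      mul_nonneg (exp_lap_entry_nonneg hM i j) (hv j)
  · simp_rw [Matrix.mulVec, dotProduct]
    rw [Finset.sum_comm]
    have : ∀ j, ∑ i, exp M i j * v j = (∑ i, exp M i j) * v j := fun j =>
      (Finset.sum_mul _ _ _).symm
    simp_rw [this, exp_colsum hM.2.2, one_mul]

end StrangAux

/-- The Strang splitting step with smoothing preserves positivity and mass. -/
theorem strangSplitting_preserves
    {d : ℕ} (hd : 1 ≤ d)
    (A : (Fin d → ℝ) → Matrix (Fin d) (Fin d) ℝ)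
    (hA : ∀ v : Fin d → ℝ, (∀ i, 0 ≤ v i) → IsGraphLaplacian (A v))
    (h : ℝ) (hh : 0 ≤ h)
    (y₀ : Fin d → ℝ) (hy₀ : ∀ i, 0 ≤ y₀ i) (hy₀sum : ∑ i : Fin d, y₀ i = 1)
    (xhalf z₁ x₁ y₁ : Fin d → ℝ)
    (hxhalf : xhalf = NormedSpace.exp ((h / 2) • A y₀) *ᵥ y₀)
    (hz₁ : z₁ = NormedSpace.exp (h • A xhalf) *ᵥ y₀)
    (hx₁ : x₁ = NormedSpace.exp ((h / 2) • A z₁) *ᵥ xhalf)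
    (hy₁ : y₁ = (1 / 2 : ℝ) • (x₁ + z₁)) :
    (∀ i, 0 ≤ y₁ i) ∧ ∑ i : Fin d, y₁ i = 1 := by
  have hh2 : 0 ≤ h / 2 := by linarith
  have hx : (∀ i, 0 ≤ xhalf i) ∧ ∑ i, xhalf i = ∑ i, y₀ i := by
    rw [hxhalf]
    exact StrangAux.step (StrangAux.smul_isGraphLaplacian hh2 (hA y₀ hy₀)) hy₀
  have hz : (∀ i, 0 ≤ z₁ i) ∧ ∑ i, z₁ i = ∑ i, y₀ i := by
    rw [hz₁]
    exact StrangAux.step (StrangAux.smul_isGraphLaplacian hh (hA xhalf hx.1)) hy₀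
  have hx1 : (∀ i, 0 ≤ x₁ i) ∧ ∑ i, x₁ i = ∑ i, xhalf i := by
    rw [hx₁]
    exact StrangAux.step (StrangAux.smul_isGraphLaplacian hh2 (hA z₁ hz.1)) hx.1
  constructor
  · intro i
    rw [hy₁]
    have : ((1 / 2 : ℝ) • (x₁ + z₁)) i = (1 / 2 : ℝ) * (x₁ i + z₁ i) := rfl
    rw [this]
    have := hx1.1 i
    have := hz.1 i
    positivity
  · rw [hy₁]
    have : ∀ i, ((1 / 2 : ℝ) • (x₁ + z₁)) i = (1 / 2 : ℝ) * (x₁ i + z₁ i) := fun _ => rfl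
    simp_rw [this, ← Finset.mul_sum]
    rw [Finset.sum_add_distrib]
    rw [hx1.2, hx.2, hz.2, hy₀sum]
    norm_num
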